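/- Let μ > 0 and δ ≥ 0 be real numbers, set ρ² := δ²/μ + μ/4, and let c, t ∈ ℝ satisfy μc² ≤ δ² and t² ≤ (δ²/μ − c²)/(ρ² − c²). Then 1 + t > 0 and the quantity K := (ρ²μ³/16)·[(1+t)(ρ² − c²)]^{−3} satisfies (√(4δ²+μ²) − 2δ)³/(μ√(4δ²+μ²)) ≤ K ≤ (√(4δ²+μ²) + 2δ)³/(μ√(4δ²+μ²)). -/

import Mathlib

noncomputable section

set_option maxHeartbeats 1000000 in
/-- The analytic content of the curvature bounds (1.8): for `μ > 0`, `δ ≥ 0`,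
`ρ² = δ²/μ + μ/4`, and reals `c`, `t` with `μc² ≤ δ²` and
`t² ≤ (δ²/μ − c²)/(ρ² − c²)`, one has `1 + t > 0`, and
`K := (ρ²μ³/16)·[(1+t)(ρ²−c²)]⁻³` satisfies
`(√(4δ²+μ²) − 2δ)³/(μ√(4δ²+μ²)) ≤ K ≤ (√(4δ²+μ²) + 2δ)³/(μ√(4δ²+μ²))`. -/
theorem stmt_15 (μ δ : ℝ) (hμ : 0 < μ) (hδ : 0 ≤ δ)
    (ρsq : ℝ) (hρ : ρsq = δ^2 / μ + μ / 4)
    (c t : ℝ) (hc : μ * c^2 ≤ δ^2)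
    (ht : t^2 ≤ (δ^2 / μ - c^2) / (ρsq - c^2)) :
    0 < 1 + t ∧
    (Real.sqrt (4 * δ^2 + μ^2) - 2 * δ)^3 / (μ * Real.sqrt (4 * δ^2 + μ^2)) ≤
      (ρsq * μ^3 / 16) * ((1 + t) * (ρsq - c^2))⁻¹^3 ∧
    (ρsq * μ^3 / 16) * ((1 + t) * (ρsq - c^2))⁻¹^3 ≤
      (Real.sqrt (4 * δ^2 + μ^2) + 2 * δ)^3 / (μ * Real.sqrt (4 * δ^2 + μ^2)) := by
  set s := Real.sqrt (4 * δ^2 + μ^2) with hs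
  have hs2 : s^2 = 4 * δ^2 + μ^2 := Real.sq_sqrt (by positivity)
  have hspos : 0 < s := Real.sqrt_pos.mpr (by positivity)
  clear hs
  clear_value s
  have hs2δ : 2 * δ < s := by nlinarith
  have hc' : c^2 ≤ δ^2 / μ := (le_div_iff₀ hμ).mpr (by linarith)
  set u := ρsq - c^2 with hu
  have huval : u = (δ^2 / μ - c^2) + μ / 4 := by rw [hu, hρ]; ring
  clear hu
  clear_value u
  have hupos : 0 < u := by nlinarith
  have huρ : u ≤ ρsq := by nlinarith [sq_nonneg c]
  have hρval : ρsq = s^2 / (4 * μ) := by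
    rw [hρ, hs2]; field_simp
  have htu : t^2 * u ≤ u - μ / 4 := by
    have h := (le_div_iff₀ hupos).mp ht
    nlinarith [h]
  set D := (1 + t) * u with hD
  clear_value D
  have hq : D^2 - 2*D*u + μ*u/4 ≤ 0 := by
    have h2 : u * (t^2 * u) ≤ u * (u - μ/4) := mul_le_mul_of_nonneg_left htu hupos.le
    have h3 : D^2 - 2*D*u + μ*u/4 = u * (t^2 * u) - u * u + μ*u/4 := by rw [hD]; ring
    linarith
  have hDpos : 0 < D := by nlinarith [sq_nonneg D]
  have h1t : 0 < 1 + t := by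
    by_contra h
    push_neg at h
    nlinarith
  -- scaled variables: V = 4μu, E = 4μD; all facts become polynomial
  have hVs : 4 * μ * u ≤ s^2 := by
    have : 4 * μ * ρsq = s^2 := by rw [hρval]; field_simp
    nlinarith
  have hVμ : μ^2 ≤ 4 * μ * u := by
    have hu4 : μ / 4 ≤ u := by linarith [huval.ge, hc']
    nlinarith
  set E := 4 * μ * D with hE
  clear_value E
  have hEpos : 0 < E := by rw [hE]; positivity
  set V := 4 * μ * u with hV
  clear_value V
  have hVpos : 0 < V := by rw [hV]; positivity
  have hqE : E^2 - 2*E*V + μ^2*V ≤ 0 := by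
    have h16 := mul_le_mul_of_nonneg_left hq (by positivity : (0:ℝ) ≤ μ^2)
    rw [hE, hV]; nlinarith [h16]
  -- upper bound E ≤ s(s+2δ)
  have hqU : 0 ≤ (s*(s+2*δ))^2 - 2*(s*(s+2*δ))*V + μ^2*(s*(s+2*δ)) * 0 + μ^2*V := by
    nlinarith [mul_nonneg (sub_nonneg.mpr hVs) (by nlinarith : (0:ℝ) ≤ 2*(s*(s+2*δ)) - μ^2),
      sq_nonneg (s + 2*δ)]
  have hEU : E ≤ s*(s+2*δ) := by
    by_contra h
    push_neg at h
    have hVU : V ≤ s*(s+2*δ) := by nlinarith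
    nlinarith [mul_pos (sub_pos.mpr h) (by linarith : (0:ℝ) < E + s*(s+2*δ) - 2*V)]
  -- lower bound s(s-2δ) ≤ E
  have hqL : 0 ≤ (s*(s-2*δ))^2 - 2*(s*(s-2*δ))*V + μ^2*V := by
    nlinarith [mul_nonneg (sub_nonneg.mpr hVs) (by nlinarith [sq_nonneg (s - 2*δ)] : (0:ℝ) ≤ 2*(s*(s-2*δ)) - μ^2),
      mul_pos hspos (by linarith : (0:ℝ) < s - 2*δ), hs2]
  have hLV : s*(s-2*δ) ≤ V := by nlinarith [mul_nonneg hspos.le hδ]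
  have hLE : s*(s-2*δ) ≤ E := by
    by_contra h
    push_neg at h
    nlinarith [mul_pos (sub_pos.mpr h) (by linarith : (0:ℝ) < 2*V - E - s*(s-2*δ))]
  -- cube facts
  have hμ2 : (s - 2*δ) * (s + 2*δ) = μ^2 := by linear_combination hs2
  have hcube : (s - 2*δ)^3 * (s + 2*δ)^3 = μ^6 := by
    calc (s - 2*δ)^3 * (s + 2*δ)^3 = ((s - 2*δ) * (s + 2*δ))^3 := by ring
    _ = (μ^2)^3 := by rw [hμ2]
    _ = μ^6 := by ring
  have hsLpos : 0 < s * (s - 2*δ) := mul_pos hspos (by linarith)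
  have key1 : (s - 2*δ)^3 * E^3 ≤ s^3 * μ^6 := by
    calc (s - 2*δ)^3 * E^3 ≤ (s - 2*δ)^3 * (s*(s+2*δ))^3 :=
          mul_le_mul_of_nonneg_left (pow_le_pow_left₀ hEpos.le hEU 3) (pow_nonneg (by linarith : (0:ℝ) ≤ s - 2*δ) 3)
      _ = ((s - 2*δ)^3 * (s + 2*δ)^3) * s^3 := by ring
      _ = s^3 * μ^6 := by rw [hcube]; ring
  have key2 : s^3 * μ^6 ≤ (s + 2*δ)^3 * E^3 := by
    calc s^3 * μ^6 = ((s - 2*δ)^3 * (s + 2*δ)^3) * s^3 := by rw [hcube]; ring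
      _ = (s + 2*δ)^3 * (s*(s-2*δ))^3 := by ring
      _ ≤ (s + 2*δ)^3 * E^3 :=
          mul_le_mul_of_nonneg_left (pow_le_pow_left₀ hsLpos.le hLE 3) (by positivity)
  have hD3pos : 0 < D^3 := by positivity
  have hE3 : E^3 = 64 * μ^3 * D^3 := by rw [hE]; ring
  have hRHS : ρsq * μ^3 / 16 * (μ * s) = s^3 * μ^3 / 64 := by
    rw [hρval]; field_simp; ring
  have h64 : (0:ℝ) < 64 * μ^3 := by positivity
  refine ⟨h1t, ?_, ?_⟩
  · rw [inv_pow, ← div_eq_mul_inv, div_le_div_iff₀ (by positivity) hD3pos, hRHS]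
    rw [← mul_le_mul_iff_right₀ h64]
    calc 64 * μ^3 * ((s - 2*δ)^3 * D^3) = (s - 2*δ)^3 * E^3 := by rw [hE3]; ring
      _ ≤ s^3 * μ^6 := key1
      _ = 64 * μ^3 * (s^3 * μ^3 / 64) := by ring
  · rw [inv_pow, ← div_eq_mul_inv, div_le_div_iff₀ hD3pos (by positivity), hRHS]
    rw [← mul_le_mul_iff_right₀ h64]
    calc 64 * μ^3 * (s^3 * μ^3 / 64) = s^3 * μ^6 := by ring
      _ ≤ (s + 2*δ)^3 * E^3 := key2
      _ = 64 * μ^3 * ((s + 2*δ)^3 * D^3) := by rw [hE3]; ring
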